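/- Let F : A ⥤ B and G : B ⥤ A be functors between categories. If the coalgebra (X, c : X ⟶ G.obj (F.obj X)) is a terminal object of the category of coalgebras for the endofunctor F ⋙ G of A, then the coalgebra (F.obj X, F.map c : F.obj X ⟶ F.obj (G.obj (F.obj X))) is a terminal object of the category of coalgebras for the endofunctor G ⋙ F of B. -/
import Mathlib


open CategoryTheory CategoryTheory.Limits

/-- Rolling property of final coalgebras: if `(X, c)` is a terminal coalgebra for `F ⋙ G`,
then `(F.obj X, F.map c)` is a terminal coalgebra for `G ⋙ F`. -/
theorem terminalCoalgebra_roll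
    {A : Type*} {B : Type*} [Category A] [Category B]
    (F : A ⥤ B) (G : B ⥤ A) (X : A) (c : X ⟶ (F ⋙ G).obj X)
    (h : IsTerminal (Endofunctor.Coalgebra.mk X c : Endofunctor.Coalgebra (F ⋙ G))) :
    Nonempty (IsTerminal
      (Endofunctor.Coalgebra.mk (F.obj X) (F.map c) : Endofunctor.Coalgebra (G ⋙ F))) := by
  -- Notation: `XC` is the terminal coalgebra `(X, c)`.
  set XC : Endofunctor.Coalgebra (F ⋙ G) := Endofunctor.Coalgebra.mk X c with hXC
  -- Lambek: `c` is an isomorphism.  Let `t` be the unique coalgebra map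
  -- from `((F ⋙ G).obj X, (F ⋙ G).map c)` to `(X, c)`.
  let GFXC : Endofunctor.Coalgebra (F ⋙ G) :=
    Endofunctor.Coalgebra.mk ((F ⋙ G).obj X) ((F ⋙ G).map c)
  let t : GFXC ⟶ XC := h.from GFXC
  -- `c` itself is a coalgebra morphism `XC ⟶ GFXC`.
  let cHom : XC ⟶ GFXC := { f := c, h := rfl }
  have hct : c ≫ t.f = 𝟙 X := by
    have : cHom ≫ t = h.from XC := h.hom_ext _ _
    have h2 : 𝟙 XC = h.from XC := h.hom_ext _ _
    have := this.trans h2.symm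
    simpa [cHom] using congrArg Endofunctor.Coalgebra.Hom.f this
  have htc : t.f ≫ c = 𝟙 ((F ⋙ G).obj X) := by
    have ht := t.h
    simp only [GFXC] at ht
    rw [← ht, ← Functor.map_comp, hct]
    exact (F ⋙ G).map_id X
  refine ⟨IsTerminal.ofUniqueHom (fun Y => ?_) (fun Y m => ?_)⟩
  · -- existence
    exact
      { f := Y.str ≫ F.map ((h.from (Endofunctor.Coalgebra.mk (G.obj Y.V) (G.map Y.str))).f)
        h := by
          have hu := (h.from (Endofunctor.Coalgebra.mk (G.obj Y.V) (G.map Y.str))).h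
          dsimp at hu ⊢
          rw [Category.assoc, ← F.map_comp, ← hu]
          simp }
  · -- uniqueness
    set u := h.from (Endofunctor.Coalgebra.mk (G.obj Y.V) (G.map Y.str)) with hu
    -- `g := G.map m.f ≫ t.f` is a coalgebra morphism `(G.obj Y.V, G.map Y.str) ⟶ (X, c)`
    have hm := m.h
    dsimp at hm
    have e1 : Y.str ≫ F.map (G.map m.f ≫ t.f) = m.f := by
      rw [F.map_comp, ← Category.assoc, hm, Category.assoc, ← F.map_comp, hct, F.map_id]
      exact Category.comp_id m.f
    let g : (Endofunctor.Coalgebra.mk (G.obj Y.V) (G.map Y.str) :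
        Endofunctor.Coalgebra (F ⋙ G)) ⟶ XC :=
      { f := G.map m.f ≫ t.f
        h := by
          show G.map Y.str ≫ (F ⋙ G).map (G.map m.f ≫ t.f) = (G.map m.f ≫ t.f) ≫ c
          rw [Category.assoc, htc, Functor.comp_map, ← G.map_comp, e1]
          exact (Category.comp_id _).symm }
    have hgu : g = u := h.hom_ext _ _
    have hgf : g.f = u.f := congrArg Endofunctor.Coalgebra.Hom.f hgu
    apply Endofunctor.Coalgebra.Hom.ext
    dsimp
    rw [← hgf]
    show m.f = Y.str ≫ F.map (G.map m.f ≫ t.f)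
    exact e1.symm
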